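/- For every integer n ≥ 2, the (n+1)-dimensional n-ary Filippov algebra D_{n+1} does not degenerate to C₃; that is, the structure of C₃ does not lie in the closure of the GL(V)-orbit of the structure of D_{n+1}. -/

import Mathlib

open Function Submodule

/-! Common framework: `V = ℂ^{n+1}`, `n`-ary multiplications as functions
`(Fin n → V) → V`, the action of `GL(V)` on them, orbits, and the
(n+1)-dimensional n-ary Filippov algebras of Kaygorodov–Volkov, each described
as an alternating `n`-linear map by its values on the increasing tuples of
distinct standard basis vectors (0-indexed: `bt n j` is the tuple omitting `e j`). -/

/-- The underlying space `V = ℂ^{n+1}`. -/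
abbrev nV (n : ℕ) : Type := Fin (n + 1) → ℂ

/-- The `j`-th standard basis vector of `V` (0-indexed). -/
def sb (n : ℕ) (j : Fin (n + 1)) : nV n := Pi.single j 1

/-- The increasing `n`-tuple of standard basis vectors omitting `e j`. -/
def bt (n : ℕ) (j : Fin (n + 1)) : Fin n → nV n := fun k => sb n (j.succAbove k)

/-- The action of `GL(V)` (invertible linear maps) on `n`-ary multiplications:
`(g • μ)(x₁, …, xₙ) = g (μ (g⁻¹ x₁, …, g⁻¹ xₙ))`. -/
noncomputable def glAct (n : ℕ) (g : nV n ≃ₗ[ℂ] nV n) (μ : (Fin n → nV n) → nV n) :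
    (Fin n → nV n) → nV n :=
  fun x => g (μ fun i => g.symm (x i))

/-- The `GL(V)`-orbit of an `n`-ary multiplication. -/
def glOrbit (n : ℕ) (μ : (Fin n → nV n) → nV n) : Set ((Fin n → nV n) → nV n) :=
  {ν | ∃ g : nV n ≃ₗ[ℂ] nV n, ν = glAct n g μ}

/-- The algebra `B`: `[e₂, …, e_{n+1}] = e₁` (0-indexed: the tuple omitting `e 0`
maps to `e 0`), all other increasing basis products zero. -/
def IsB (n : ℕ) (μ : AlternatingMap ℂ (nV n) (nV n) (Fin n)) : Prop :=
  μ (bt n 0) = sb n 0 ∧ ∀ j : Fin (n + 1), j ≠ 0 → μ (bt n j) = 0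

/-- The algebra `C₁`: `[e₂, …, e_{n+1}] = e₁`, `[e₁, e₃, …, e_{n+1}] = e₂`. -/
def IsC1 (n : ℕ) (μ : AlternatingMap ℂ (nV n) (nV n) (Fin n)) : Prop :=
  μ (bt n 0) = sb n 0 ∧ μ (bt n 1) = sb n 1 ∧
    ∀ j : Fin (n + 1), j ≠ 0 → j ≠ 1 → μ (bt n j) = 0

/-- The algebra `C₂(α)`: `[e₂, …, e_{n+1}] = α e₁ + e₂`, `[e₁, e₃, …, e_{n+1}] = e₂`. -/
def IsC2 (n : ℕ) (α : ℂ) (μ : AlternatingMap ℂ (nV n) (nV n) (Fin n)) : Prop :=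
  μ (bt n 0) = α • sb n 0 + sb n 1 ∧ μ (bt n 1) = sb n 1 ∧
    ∀ j : Fin (n + 1), j ≠ 0 → j ≠ 1 → μ (bt n j) = 0

/-- The algebra `C₃`: `[e₁, e₃, …, e_{n+1}] = e₁`, `[e₂, e₃, …, e_{n+1}] = e₂`. -/
def IsC3 (n : ℕ) (μ : AlternatingMap ℂ (nV n) (nV n) (Fin n)) : Prop :=
  μ (bt n 1) = sb n 0 ∧ μ (bt n 0) = sb n 1 ∧
    ∀ j : Fin (n + 1), j ≠ 0 → j ≠ 1 → μ (bt n j) = 0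

/-- The algebra `D_r`: `[e₁, …, e_{i-1}, e_{i+1}, …, e_{n+1}] = e_i` for `1 ≤ i ≤ r`
(0-indexed: the tuple omitting `e j` maps to `e j` for `j < r` and to `0` otherwise). -/
def IsD (n r : ℕ) (μ : AlternatingMap ℂ (nV n) (nV n) (Fin n)) : Prop :=
  ∀ j : Fin (n + 1), ((j : ℕ) < r → μ (bt n j) = sb n j) ∧ (r ≤ (j : ℕ) → μ (bt n j) = 0)

/-! ### Auxiliary lemmas -/

/-- Key lemma: for the algebra `D_{n+1}`, the value of `μ` on an injective tuple of basis
vectors is a multiple of the omitted basis vector, hence its `j`-th coordinate vanishes for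
any `j` in the range of the index tuple. -/
lemma keyD (m : ℕ) (μ : AlternatingMap ℂ (nV (m + 1)) (nV (m + 1)) (Fin (m + 1)))
    (hμ : IsD (m + 1) (m + 2) μ) (w : Fin (m + 1) → Fin (m + 2)) (hw : Function.Injective w)
    (j : Fin (m + 2)) (hj : ∃ k, w k = j) :
    μ (fun k => sb (m + 1) (w k)) j = 0 := by
  have hns : ¬ Function.Surjective w := by
    intro hs
    have := Fintype.card_le_of_surjective w hs
    simp [Fintype.card_fin] at this
  have hex0 : ∃ a, ∀ k, w k ≠ a := by
    by_contra hc
    push_neg at hc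
    exact hns fun b => hc b
  obtain ⟨a, ha⟩ := hex0
  have hex : ∀ k, ∃ t : Fin (m + 1), a.succAbove t = w k :=
    fun k => Fin.exists_succAbove_eq (ha k)
  choose σ hσ using hex
  have hσinj : Function.Injective σ := by
    intro x y hxy
    apply hw
    rw [← hσ x, ← hσ y, hxy]
  let e : Equiv.Perm (Fin (m + 1)) :=
    Equiv.ofBijective σ (Finite.injective_iff_bijective.mp hσinj)
  have htuple : (fun k => sb (m + 1) (w k)) = (bt (m + 1) a) ∘ e := by
    funext k
    simp only [Function.comp_apply, bt, e, Equiv.ofBijective_apply, hσ k]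
  have haj : j ≠ a := by
    obtain ⟨k, hk⟩ := hj
    intro h
    exact ha k (by rw [hk, h])
  rw [htuple, μ.map_perm, (hμ a).1 a.isLt]
  have : sb (m + 1) a j = 0 := Pi.single_eq_of_ne haj 1
  simp [this]

/-- Identifying basis tuples through `Fin.cons`. -/
lemma sb_cons (m : ℕ) (j : Fin (m + 2)) (v : Fin m → Fin (m + 2)) :
    (Fin.cons (sb (m + 1) j) (fun i => sb (m + 1) (v i)) : Fin (m + 1) → nV (m + 1)) =
      fun k => sb (m + 1) ((Fin.cons j v : Fin (m + 1) → Fin (m + 2)) k) := by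
  funext k
  refine Fin.cases ?_ (fun i => ?_) k <;> simp

/-- The trace of every left-multiplication operator of `D_{n+1}` is zero. -/
lemma traceD (m : ℕ) (μ : AlternatingMap ℂ (nV (m + 1)) (nV (m + 1)) (Fin (m + 1)))
    (hμ : IsD (m + 1) (m + 2) μ) (y : Fin m → nV (m + 1)) :
    ∑ j : Fin (m + 2), μ (Fin.cons (sb (m + 1) j) y) j = 0 := by
  let T : MultilinearMap ℂ (fun _ : Fin m => nV (m + 1)) ℂ :=
    ∑ j : Fin (m + 2), (LinearMap.proj j).compMultilinearMap
      (μ.toMultilinearMap.curryLeft (sb (m + 1) j))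
  have hT : T = 0 := by
    refine Module.Basis.ext_multilinear (ιM := fun _ => Fin (m + 2)) (fun _ => Pi.basisFun ℂ (Fin (m + 2))) fun v => ?_
    have hbv : (fun i => (Pi.basisFun ℂ (Fin (m + 2))) (v i)) =
        fun i => sb (m + 1) (v i) := by
      funext i
      simp [sb]
    rw [hbv]
    simp only [T, MultilinearMap.sum_apply, LinearMap.compMultilinearMap_apply,
      MultilinearMap.curryLeft_apply, AlternatingMap.coe_multilinearMap,
      LinearMap.proj_apply, MultilinearMap.zero_apply]
    refine Finset.sum_eq_zero fun j _ => ?_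
    rw [sb_cons]
    by_cases hinj : Function.Injective (Fin.cons j v : Fin (m + 1) → Fin (m + 2))
    · exact keyD m μ hμ _ hinj j ⟨0, rfl⟩
    · rw [Function.not_injective_iff] at hinj
      obtain ⟨x, z, hxz, hne⟩ := hinj
      have h0 : μ (fun k => sb (m + 1) ((Fin.cons j v : Fin (m + 1) → Fin (m + 2)) k)) = 0 :=
        μ.map_eq_zero_of_eq _ (congrArg (sb (m + 1)) hxz) hne
      rw [h0]
      rfl
  have := DFunLike.congr_fun hT y
  simpa only [T, MultilinearMap.sum_apply, LinearMap.compMultilinearMap_apply,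
    MultilinearMap.curryLeft_apply, AlternatingMap.coe_multilinearMap,
    LinearMap.proj_apply, MultilinearMap.zero_apply] using this

/-- Trace as the sum of diagonal coefficients in the standard basis. -/
lemma trace_diag (m : ℕ) (A : nV (m + 1) →ₗ[ℂ] nV (m + 1)) :
    LinearMap.trace ℂ (nV (m + 1)) A = ∑ j : Fin (m + 2), A (sb (m + 1) j) j := by
  rw [LinearMap.trace_eq_matrix_trace ℂ (Pi.basisFun ℂ (Fin (m + 2)))]
  rw [Matrix.trace]
  refine Finset.sum_congr rfl fun j _ => ?_
  simp [Matrix.diag, LinearMap.toMatrix_apply, sb]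

/-- Left multiplication as a linear map. -/
def consLin (m : ℕ) (μ : AlternatingMap ℂ (nV (m + 1)) (nV (m + 1)) (Fin (m + 1)))
    (y : Fin m → nV (m + 1)) : nV (m + 1) →ₗ[ℂ] nV (m + 1) where
  toFun z := μ (Fin.cons z y)
  map_add' a b := μ.toMultilinearMap.cons_add y a b
  map_smul' c a := μ.toMultilinearMap.cons_smul y c a

/-- For every integer `n ≥ 2`, the algebra `D_{n+1}` does not degenerate
to `C₃`. -/
theorem Dn1_not_degenerates_to_C3 (n : ℕ) (hn : 2 ≤ n)
    (μ ν : AlternatingMap ℂ (nV n) (nV n) (Fin n)) (hμ : IsD n (n + 1) μ) (hν : IsC3 n ν) :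
    ⇑ν ∉ closure (glOrbit n ⇑μ) := by
  obtain ⟨m, rfl⟩ : ∃ m, n = m + 1 := ⟨n - 1, by omega⟩
  set xs : Fin m → nV (m + 1) := fun k => sb (m + 1) (Fin.succ (Fin.succ k)) with hxs
  set F : ((Fin (m + 1) → nV (m + 1)) → nV (m + 1)) → ℂ :=
    fun ρ => ∑ j : Fin (m + 2), ρ (Fin.cons (sb (m + 1) j) xs) j with hF
  have hFcont : Continuous F := by
    refine continuous_finset_sum _ fun j _ => ?_
    exact (continuous_apply (j : Fin (m + 2))).comp
      (continuous_apply (Fin.cons (sb (m + 1) j) xs : Fin (m + 1) → nV (m + 1)))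
  have horb : ∀ ρ ∈ glOrbit (m + 1) ⇑μ, F ρ = 0 := by
    rintro ρ ⟨g, rfl⟩
    set y : Fin m → nV (m + 1) := fun k => g.symm (xs k) with hy
    set M : nV (m + 1) →ₗ[ℂ] nV (m + 1) := consLin m μ y with hM
    set A : nV (m + 1) →ₗ[ℂ] nV (m + 1) :=
      g.toLinearMap ∘ₗ M ∘ₗ g.symm.toLinearMap with hA
    have hrw : ∀ j : Fin (m + 2),
        glAct (m + 1) g (⇑μ) (Fin.cons (sb (m + 1) j) xs) = A (sb (m + 1) j) := by
      intro j
      simp only [glAct, hA, LinearMap.coe_comp, Function.comp_apply,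
        LinearEquiv.coe_coe, hM, consLin, LinearMap.coe_mk, AddHom.coe_mk]
      congr 1
      congr 1
      funext i
      refine Fin.cases ?_ (fun k => ?_) i <;> simp [hy]
    have hAconj : A = g.conj M := by
      ext z
      simp [hA, LinearEquiv.conj_apply]
    calc F (glAct (m + 1) g ⇑μ)
        = ∑ j : Fin (m + 2), A (sb (m + 1) j) j := by
          simp only [hF]
          exact Finset.sum_congr rfl fun j _ => by rw [hrw j]
      _ = LinearMap.trace ℂ (nV (m + 1)) A := (trace_diag m A).symm
      _ = LinearMap.trace ℂ (nV (m + 1)) M := by rw [hAconj, LinearMap.trace_conj']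
      _ = ∑ j : Fin (m + 2), M (sb (m + 1) j) j := trace_diag m M
      _ = ∑ j : Fin (m + 2), μ (Fin.cons (sb (m + 1) j) y) j := rfl
      _ = 0 := traceD m μ hμ y
  have hclosed : closure (glOrbit (m + 1) ⇑μ) ⊆ F ⁻¹' {0} :=
    closure_minimal (fun ρ hρ => horb ρ hρ) (isClosed_singleton.preimage hFcont)
  intro hmem
  have h0 : F ⇑ν = 0 := hclosed hmem
  have ht1 : (Fin.cons (sb (m + 1) 0) xs : Fin (m + 1) → nV (m + 1)) = bt (m + 1) 1 := by
    funext i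
    refine Fin.cases ?_ (fun k => ?_) i
    · have : (1 : Fin (m + 2)).succAbove 0 = 0 := by
        rw [Fin.succAbove_of_castSucc_lt]
        · rfl
        · simp [Fin.lt_def]
      simp [bt, this]
    · have : (1 : Fin (m + 2)).succAbove k.succ = k.succ.succ := by
        rw [Fin.succAbove_of_le_castSucc]
        simp [Fin.le_def, Fin.lt_def]
      simp [bt, this, hxs]
  have ht0 : (Fin.cons (sb (m + 1) 1) xs : Fin (m + 1) → nV (m + 1)) = bt (m + 1) 0 := by
    funext i
    refine Fin.cases ?_ (fun k => ?_) i
    · simp [bt, Fin.succAbove_zero]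
    · simp [bt, Fin.succAbove_zero, hxs]
  have hFν : F ⇑ν = 2 := by
    show (∑ j : Fin (m + 2), ν (Fin.cons (sb (m + 1) j) xs) j) = 2
    rw [Fin.sum_univ_succ, Fin.sum_univ_succ]
    have e0 : ν (Fin.cons (sb (m + 1) 0) xs) 0 = 1 := by
      rw [ht1, hν.1]
      simp [sb]
    have e1 : ν (Fin.cons (sb (m + 1) ((0 : Fin (m + 1)).succ)) xs) ((0 : Fin (m + 1)).succ)
        = 1 := by
      have : ((0 : Fin (m + 1)).succ : Fin (m + 2)) = 1 := rfl
      rw [this, ht0, hν.2.1]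
      simp [sb]
    have erest : ∀ k : Fin m,
        ν (Fin.cons (sb (m + 1) k.succ.succ) xs) (k.succ.succ : Fin (m + 2)) = 0 := by
      intro k
      have hz : ν (Fin.cons (sb (m + 1) k.succ.succ) xs) = 0 := by
        refine ν.map_eq_zero_of_eq _ (i := 0) (j := k.succ) ?_ ?_
        · simp [hxs]
        · exact (Fin.succ_ne_zero k).symm
      rw [hz]
      rfl
    rw [e0, e1]
    rw [Finset.sum_eq_zero fun k _ => erest k]
    norm_num
  rw [hFν] at h0
  norm_num at h0
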